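/- Define the entire functions c(x) = Σ_{n≥0} (−1)ⁿ xⁿ/(2n)! and s(x) = Σ_{n≥0} (−1)ⁿ xⁿ/(2n+1)! (so that c(x) = cos√x and s(x) = sin√x/√x for x > 0). Fix real numbers ω ≠ 0, σ, ξ, and for Δ > 0 set κ(Δ) = ω² − σξ/√Δ. Then, as Δ → 0⁺: (i) c(κ(Δ)Δ²) − 1 = O(Δ^{3/2}); (ii) ωΔ·s(κ(Δ)Δ²) − ωΔ = O(Δ^{3/2}); (iii) −(κ(Δ)Δ/ω)·s(κ(Δ)Δ²) − (−ωΔ + σξ√Δ/ω) = O(Δ^{3/2}). Consequently the Prüfer-form transfer matrix of −ψ'' + (σξ/√Δ)ψ = ω²ψ over an interval of length Δ equals [[1, ωΔ], [−ωΔ + σξ√Δ/ω, 1]] + O(Δ^{3/2}). -/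

import Mathlib

open Asymptotics Filter Topology
set_option maxHeartbeats 1000000

attribute [local instance] Matrix.normedAddCommGroup

noncomputable def cser (x : ℝ) : ℝ := ∑' n : ℕ, (-1) ^ n * x ^ n / ((2 * n).factorial : ℝ)

noncomputable def sser (x : ℝ) : ℝ := ∑' n : ℕ, (-1) ^ n * x ^ n / ((2 * n + 1).factorial : ℝ)

lemma tail_est (F : ℕ → ℕ) (hF : ∀ n, n ≤ F n) {x : ℝ} (hx : |x| ≤ 1) :
    |(∑' n : ℕ, (-1) ^ n * x ^ n / ((F n).factorial : ℝ)) - 1 / ((F 0).factorial : ℝ)|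
      ≤ 2 * |x| := by
  have habs : ∀ n : ℕ, |(-1 : ℝ) ^ n * x ^ n / ((F n).factorial : ℝ)|
      = |x| ^ n / ((F n).factorial : ℝ) := by
    intro n
    rw [abs_div, abs_mul, abs_pow, abs_pow, abs_neg, abs_one, one_pow, one_mul,
      Nat.abs_cast]
  have hsum : Summable (fun n : ℕ => (-1 : ℝ) ^ n * x ^ n / ((F n).factorial : ℝ)) := by
    refine Summable.of_norm_bounded (Real.summable_pow_div_factorial |x|) ?_
    intro n
    rw [Real.norm_eq_abs, habs]
    gcongr
    exact hF n
  rw [hsum.tsum_eq_zero_add]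
  simp only [pow_zero, one_mul]
  rw [add_sub_cancel_left]
  have hb : ∀ n : ℕ, ‖(-1 : ℝ) ^ (n + 1) * x ^ (n + 1) / ((F (n + 1)).factorial : ℝ)‖
      ≤ |x| * (1 / 2 : ℝ) ^ n := by
    intro n
    rw [Real.norm_eq_abs, habs, pow_succ, mul_comm (|x| ^ n), mul_div_assoc]
    gcongr
    rw [div_pow, one_pow]
    apply div_le_div₀ (by norm_num) (pow_le_one₀ (abs_nonneg x) hx) (by positivity)
    have h1 : (2 : ℕ) ^ n ≤ (n + 1).factorial := by
      simpa [Nat.add_comm] using (Nat.factorial_mul_pow_le_factorial (m := 1) (n := n))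
    have h2 : (n + 1).factorial ≤ (F (n + 1)).factorial := Nat.factorial_le (hF (n + 1))
    exact_mod_cast h1.trans h2
  calc |∑' n : ℕ, (-1 : ℝ) ^ (n + 1) * x ^ (n + 1) / ((F (n + 1)).factorial : ℝ)|
      ≤ |x| * 2 := tsum_of_norm_bounded ((hasSum_geometric_two).mul_left |x|) hb
    _ = 2 * |x| := mul_comm _ _

lemma cser_est {x : ℝ} (hx : |x| ≤ 1) : |cser x - 1| ≤ 2 * |x| := by
  simpa [cser] using tail_est (fun n => 2 * n) (fun n => Nat.le_mul_of_pos_left n (by norm_num)) hx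

lemma sser_est {x : ℝ} (hx : |x| ≤ 1) : |sser x - 1| ≤ 2 * |x| := by
  simpa [sser] using tail_est (fun n => 2 * n + 1) (fun n => (Nat.le_mul_of_pos_left n (by norm_num)).trans (Nat.le_succ _)) hx

lemma rpow32 {Δ : ℝ} (h : 0 < Δ) : Δ ^ ((3 : ℝ) / 2) = Δ * Real.sqrt Δ := by
  rw [show (3 : ℝ) / 2 = 1 + 1 / 2 by norm_num, Real.rpow_add h, Real.rpow_one,
    Real.sqrt_eq_rpow]

theorem stmt_11 (ω σ ξ : ℝ) (hω : ω ≠ 0) (κ : ℝ → ℝ)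
    (hκ : ∀ Δ, 0 < Δ → κ Δ = ω ^ 2 - σ * ξ / Real.sqrt Δ) :
    ((fun Δ => cser (κ Δ * Δ ^ 2) - 1) =O[𝓝[>] (0:ℝ)] fun Δ => Δ ^ ((3:ℝ)/2)) ∧
    ((fun Δ => ω * Δ * sser (κ Δ * Δ ^ 2) - ω * Δ) =O[𝓝[>] (0:ℝ)] fun Δ => Δ ^ ((3:ℝ)/2)) ∧
    ((fun Δ => -(κ Δ * Δ / ω) * sser (κ Δ * Δ ^ 2) - (-(ω * Δ) + σ * ξ * Real.sqrt Δ / ω))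
        =O[𝓝[>] (0:ℝ)] fun Δ => Δ ^ ((3:ℝ)/2)) ∧
    ((fun Δ => (!![cser (κ Δ * Δ ^ 2), ω * Δ * sser (κ Δ * Δ ^ 2);
                  -(κ Δ * Δ / ω) * sser (κ Δ * Δ ^ 2), cser (κ Δ * Δ ^ 2)]
                - !![1, ω * Δ; -(ω * Δ) + σ * ξ * Real.sqrt Δ / ω, 1]
                : Matrix (Fin 2) (Fin 2) ℝ))
        =O[𝓝[>] (0:ℝ)] fun Δ => Δ ^ ((3:ℝ)/2)) := by
  set M : ℝ := ω ^ 2 + |σ * ξ| with hMdef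
  have hM : 0 ≤ M := by positivity
  set C1 : ℝ := 2 * M with hC1
  set C2 : ℝ := |ω| * (2 * M) with hC2
  set C3 : ℝ := (M / |ω|) * (2 * M) with hC3
  have hC1n : 0 ≤ C1 := by positivity
  have hC2n : 0 ≤ C2 := by positivity
  have hC3n : 0 ≤ C3 := by positivity
  set δ : ℝ := min 1 ((M + 1)⁻¹ ^ 2) with hδdef
  have hδpos : 0 < δ := lt_min one_pos (by positivity)
  have hev : ∀ᶠ Δ in 𝓝[>] (0:ℝ), Δ ∈ Set.Ioc (0:ℝ) δ :=
    eventually_of_mem (Ioc_mem_nhdsGT hδpos) (fun x hx => hx)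
  have key : ∀ᶠ Δ in 𝓝[>] (0:ℝ),
      ‖cser (κ Δ * Δ ^ 2) - 1‖ ≤ C1 * ‖Δ ^ ((3:ℝ)/2)‖ ∧
      ‖ω * Δ * sser (κ Δ * Δ ^ 2) - ω * Δ‖ ≤ C2 * ‖Δ ^ ((3:ℝ)/2)‖ ∧
      ‖-(κ Δ * Δ / ω) * sser (κ Δ * Δ ^ 2) - (-(ω * Δ) + σ * ξ * Real.sqrt Δ / ω)‖
        ≤ C3 * ‖Δ ^ ((3:ℝ)/2)‖ := by
    refine hev.mono fun Δ hΔ => ?_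
    obtain ⟨hp, hle⟩ := hΔ
    have hle1 : Δ ≤ 1 := hle.trans (min_le_left _ _)
    have hsq : Real.sqrt Δ * Real.sqrt Δ = Δ := Real.mul_self_sqrt hp.le
    have hspos : 0 < Real.sqrt Δ := Real.sqrt_pos.mpr hp
    have hsle1 : Real.sqrt Δ ≤ 1 := Real.sqrt_le_one.mpr hle1
    have hΔles : Δ ≤ Real.sqrt Δ := by nlinarith
    have hsleM : Real.sqrt Δ ≤ (M + 1)⁻¹ := by
      have h' : Δ ≤ (M + 1)⁻¹ ^ 2 := hle.trans (min_le_right _ _)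
      calc Real.sqrt Δ ≤ Real.sqrt ((M + 1)⁻¹ ^ 2) := Real.sqrt_le_sqrt h'
        _ = (M + 1)⁻¹ := Real.sqrt_sq (by positivity)
    have hκ' : κ Δ = ω ^ 2 - σ * ξ / Real.sqrt Δ := hκ Δ hp
    have hdiv : Δ ^ 2 / Real.sqrt Δ = Δ * Real.sqrt Δ := by
      rw [div_eq_iff hspos.ne', sq, mul_assoc, hsq]
    have hX : κ Δ * Δ ^ 2 = ω ^ 2 * Δ ^ 2 - σ * ξ * (Δ * Real.sqrt Δ) := by
      rw [hκ', sub_mul, mul_comm (σ * ξ / Real.sqrt Δ) (Δ ^ 2), mul_div_assoc',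
        mul_comm (Δ ^ 2) (σ * ξ), mul_div_assoc, hdiv]
    have hXb : |κ Δ * Δ ^ 2| ≤ M * (Δ * Real.sqrt Δ) := by
      rw [hX]
      calc |ω ^ 2 * Δ ^ 2 - σ * ξ * (Δ * Real.sqrt Δ)|
          ≤ |ω ^ 2 * Δ ^ 2| + |σ * ξ * (Δ * Real.sqrt Δ)| := abs_sub _ _
        _ = ω ^ 2 * Δ ^ 2 + |σ * ξ| * (Δ * Real.sqrt Δ) := by
            rw [abs_of_nonneg (by positivity), abs_mul,
              abs_of_nonneg (by positivity : (0:ℝ) ≤ Δ * Real.sqrt Δ)]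
        _ ≤ ω ^ 2 * (Δ * Real.sqrt Δ) + |σ * ξ| * (Δ * Real.sqrt Δ) := by nlinarith [mul_le_mul_of_nonneg_left (mul_le_mul_of_nonneg_left hΔles hp.le) (sq_nonneg ω)]
        _ = M * (Δ * Real.sqrt Δ) := by rw [hMdef]; ring
    have hMs : M * (Δ * Real.sqrt Δ) ≤ 1 := by
      calc M * (Δ * Real.sqrt Δ) ≤ M * Real.sqrt Δ := by nlinarith [mul_le_mul_of_nonneg_left (mul_le_mul_of_nonneg_right hle1 hspos.le) hM]
        _ ≤ M * (M + 1)⁻¹ := by gcongr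
        _ = M / (M + 1) := by rw [div_eq_mul_inv]
        _ ≤ 1 := (div_le_one (by positivity)).mpr (by linarith)
    have hX1 : |κ Δ * Δ ^ 2| ≤ 1 := hXb.trans hMs
    have hrw : Δ ^ ((3:ℝ)/2) = Δ * Real.sqrt Δ := rpow32 hp
    have hnr : ‖Δ ^ ((3:ℝ)/2)‖ = Δ * Real.sqrt Δ := by
      rw [Real.norm_eq_abs, hrw, abs_of_nonneg (by positivity)]
    have hc : |cser (κ Δ * Δ ^ 2) - 1| ≤ 2 * (M * (Δ * Real.sqrt Δ)) := by
      calc |cser (κ Δ * Δ ^ 2) - 1| ≤ 2 * |κ Δ * Δ ^ 2| := cser_est hX1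
        _ ≤ 2 * (M * (Δ * Real.sqrt Δ)) := by linarith
    have hs : |sser (κ Δ * Δ ^ 2) - 1| ≤ 2 * (M * (Δ * Real.sqrt Δ)) := by
      calc |sser (κ Δ * Δ ^ 2) - 1| ≤ 2 * |κ Δ * Δ ^ 2| := sser_est hX1
        _ ≤ 2 * (M * (Δ * Real.sqrt Δ)) := by linarith
    refine ⟨?_, ?_, ?_⟩
    · rw [Real.norm_eq_abs, hnr, hC1]
      calc |cser (κ Δ * Δ ^ 2) - 1| ≤ 2 * (M * (Δ * Real.sqrt Δ)) := hc
        _ = 2 * M * (Δ * Real.sqrt Δ) := by ring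
    · rw [Real.norm_eq_abs, hnr, hC2]
      have : ω * Δ * sser (κ Δ * Δ ^ 2) - ω * Δ = (ω * Δ) * (sser (κ Δ * Δ ^ 2) - 1) := by
        ring
      rw [this, abs_mul, abs_mul, abs_of_nonneg hp.le]
      calc |ω| * Δ * |sser (κ Δ * Δ ^ 2) - 1|
          ≤ |ω| * 1 * (2 * (M * (Δ * Real.sqrt Δ))) := by
            apply mul_le_mul (by nlinarith [abs_nonneg ω]) hs (abs_nonneg _) (by positivity)
        _ = |ω| * (2 * M) * (Δ * Real.sqrt Δ) := by ring
    · rw [Real.norm_eq_abs, hnr, hC3]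
      have hκΔ : κ Δ * Δ = ω ^ 2 * Δ - σ * ξ * Real.sqrt Δ := by
        rw [hκ', sub_mul, mul_comm (σ * ξ / Real.sqrt Δ) Δ, mul_div_assoc',
          mul_comm Δ (σ * ξ), mul_div_assoc]
        congr 1
        rw [← hsq]
        field_simp
        rw [Real.sqrt_sq hspos.le]
      have hlin : -(κ Δ * Δ / ω) = -(ω * Δ) + σ * ξ * Real.sqrt Δ / ω := by
        rw [hκΔ]
        field_simp
        ring
      have hre : -(κ Δ * Δ / ω) * sser (κ Δ * Δ ^ 2)
          - (-(ω * Δ) + σ * ξ * Real.sqrt Δ / ω)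
          = (-(κ Δ * Δ / ω)) * (sser (κ Δ * Δ ^ 2) - 1) := by
        rw [← hlin]; ring
      have hκn : |κ Δ * Δ| ≤ M := by
        rw [hκΔ]
        calc |ω ^ 2 * Δ - σ * ξ * Real.sqrt Δ|
            ≤ |ω ^ 2 * Δ| + |σ * ξ * Real.sqrt Δ| := abs_sub _ _
          _ = ω ^ 2 * Δ + |σ * ξ| * Real.sqrt Δ := by
              rw [abs_of_nonneg (by positivity), abs_mul,
                abs_of_nonneg hspos.le]
          _ ≤ ω ^ 2 * 1 + |σ * ξ| * 1 := by
              gcongr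
          _ = M := by rw [hMdef]; ring
      have hκb : |κ Δ * Δ / ω| ≤ M / |ω| := by
        rw [abs_div]
        gcongr
      rw [hre, abs_mul, abs_neg]
      calc |κ Δ * Δ / ω| * |sser (κ Δ * Δ ^ 2) - 1|
          ≤ (M / |ω|) * (2 * (M * (Δ * Real.sqrt Δ))) :=
            mul_le_mul hκb hs (abs_nonneg _) (by positivity)
        _ = M / |ω| * (2 * M) * (Δ * Real.sqrt Δ) := by ring
  refine ⟨isBigO_iff.mpr ⟨C1, key.mono fun Δ h => h.1⟩,
    isBigO_iff.mpr ⟨C2, key.mono fun Δ h => h.2.1⟩,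
    isBigO_iff.mpr ⟨C3, key.mono fun Δ h => h.2.2⟩,
    isBigO_iff.mpr ⟨max C1 (max C2 C3), key.mono fun Δ h => ?_⟩⟩
  have hCn : 0 ≤ max C1 (max C2 C3) * ‖Δ ^ ((3:ℝ)/2)‖ := by
    apply mul_nonneg (le_trans hC1n (le_max_left _ _)) (norm_nonneg _)
  rw [Matrix.norm_le_iff hCn]
  intro i j
  have h1 := h.1.trans (mul_le_mul_of_nonneg_right (le_max_left C1 (max C2 C3)) (norm_nonneg _))
  have h2 := h.2.1.trans (mul_le_mul_of_nonneg_right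
    ((le_max_left C2 C3).trans (le_max_right C1 (max C2 C3))) (norm_nonneg _))
  have h3 := h.2.2.trans (mul_le_mul_of_nonneg_right
    ((le_max_right C2 C3).trans (le_max_right C1 (max C2 C3))) (norm_nonneg _))
  fin_cases i <;> fin_cases j <;>
    simp only [Matrix.sub_apply, Matrix.cons_val', Matrix.cons_val_zero, Matrix.empty_val',
      Matrix.cons_val_fin_one, Matrix.cons_val_one, Matrix.head_cons, Matrix.head_fin_const] <;>
    [exact h1; exact h2; exact h3; exact h1]
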